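/- Let T be a rooted phylogenetic X-tree, L a distinguished minimal topological lasso for T, and Y ⊆ X with |Y| ≥ 3. Then the restriction L|_Y = {ab ∈ L : a, b ∈ Y} is a distinguished minimal topological lasso for the restricted tree T|_Y if and only if the induced subgraph Γ(L|_Y) of Γ(L) on Y is connected. -/

import Mathlib

open scoped Classical

/-- A rooted `X`-tree on vertex type `V`: a finite rooted tree encoded by a parent
function, whose leaves (the vertices with no children) are bijectively labelled by `X`. -/
structure XTree (X V : Type) where
  root : V
  parent : V → V
  parent_root : parent root = root
  reaches : ∀ v : V, ∃ n : ℕ, parent^[n] v = root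
  leaf : X → V
  leaf_inj : Function.Injective leaf
  leaf_iff : ∀ v : V, (∀ w : V, parent w = v → w = v) ↔ v ∈ Set.range leaf

namespace XTree

variable {X V : Type}

/-- The children of a vertex. -/
def children (T : XTree X V) (v : V) : Set V := {w | T.parent w = v ∧ w ≠ v}

def IsLeaf (T : XTree X V) (v : V) : Prop := v ∈ Set.range T.leaf

def Interior (T : XTree X V) (v : V) : Prop := ¬ T.IsLeaf v

/-- Phylogenetic: root has at least two children, and no non-root vertex has exactly
one child (no degree-two vertices apart from possibly the root). -/
def IsPhylo (T : XTree X V) : Prop :=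
  2 ≤ (T.children T.root).ncard ∧
    ∀ v : V, v ≠ T.root → T.Interior v → 2 ≤ (T.children v).ncard

/-- `T.Desc v w` : `w` is a descendant of `v` (or equal to `v`). -/
def Desc (T : XTree X V) (v w : V) : Prop := ∃ n : ℕ, T.parent^[n] w = v

/-- The set of leaf labels below a vertex. -/
def leafSet (T : XTree X V) (v : V) : Set X := {x | T.Desc v (T.leaf x)}

/-- `v` is the last common ancestor of the set `S` of vertices. -/
def IsLCA (T : XTree X V) (v : V) (S : Set V) : Prop :=
  (∀ w ∈ S, T.Desc v w) ∧ ∀ u : V, (∀ w ∈ S, T.Desc u w) → T.Desc u v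

/-- Not a star tree: some interior vertex other than the root. -/
def NonDegenerate (T : XTree X V) : Prop := ∃ v : V, T.Interior v ∧ v ≠ T.root

end XTree

/-- A cord: a 2-element subset of `X`. -/
def IsCord {X : Type} (c : Set X) : Prop := ∃ a b : X, a ≠ b ∧ c = {a, b}

/-- The graph `Γ(L)` with vertex set `X` and edge set `L`. -/
def cordGraph {X : Type} (L : Set (Set X)) : SimpleGraph X where
  Adj a b := a ≠ b ∧ ({a, b} : Set X) ∈ L
  symm := by
    constructor
    intro a b h
    exact ⟨Ne.symm h.1, by rw [Set.pair_comm]; exact h.2⟩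
  loopless := by constructor; intro a h; exact h.1 rfl

/-- Topological lasso, via the child-edge graph characterization: for every interior
vertex, any two distinct child subtrees are joined by a cord of `L`. -/
def XTree.IsTopoLasso {X V : Type} (T : XTree X V) (L : Set (Set X)) : Prop :=
  ∀ v c₁ c₂ : V, c₁ ∈ T.children v → c₂ ∈ T.children v → c₁ ≠ c₂ →
    ∃ a b : X, a ∈ T.leafSet c₁ ∧ b ∈ T.leafSet c₂ ∧ ({a, b} : Set X) ∈ L

/-- Set-inclusion minimal topological lasso. -/
def XTree.IsMinTopoLasso {X V : Type} (T : XTree X V) (L : Set (Set X)) : Prop :=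
  T.IsTopoLasso L ∧ ∀ L' ⊆ L, T.IsTopoLasso L' → L' = L

/-- A nonempty vertex set inducing a connected subgraph with no cut vertex. -/
def GoodSet {α : Type} (G : SimpleGraph α) (B : Set α) : Prop :=
  B.Nonempty ∧ (G.induce B).Connected ∧
    ∀ v ∈ B, (B \ {v}).Nonempty → (G.induce (B \ {v})).Connected

/-- A block: a maximal connected induced subgraph without a cut vertex. -/
def IsBlock {α : Type} (G : SimpleGraph α) (B : Set α) : Prop :=
  GoodSet G B ∧ ∀ C : Set α, GoodSet G C → B ⊆ C → B = C

/-- A block graph: every block is a clique. -/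
def IsBlockGraph {α : Type} (G : SimpleGraph α) : Prop :=
  ∀ B : Set α, IsBlock G B → G.IsClique B

/-- A cut vertex: deleting it disconnects the graph. -/
def IsCutVtx {α : Type} (G : SimpleGraph α) (v : α) : Prop :=
  ¬ (G.induce {w | w ≠ v}).Connected

/-- Claw-free: no induced `K_{1,3}`. -/
def ClawFree {α : Type} (G : SimpleGraph α) : Prop :=
  ¬ ∃ v a b c : α, a ≠ b ∧ a ≠ c ∧ b ≠ c ∧
    G.Adj v a ∧ G.Adj v b ∧ G.Adj v c ∧ ¬ G.Adj a b ∧ ¬ G.Adj a c ∧ ¬ G.Adj b c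

/-- The child-edge graph `G(L,v)`: vertices are the children of `v` (equivalently
the child edges of `v`), two of them adjacent if a cord of `L` joins their subtrees. -/
def childGraph {X V : Type} (T : XTree X V) (L : Set (Set X)) (v : V) :
    SimpleGraph {c : V // c ∈ T.children v} where
  Adj c₁ c₂ := c₁ ≠ c₂ ∧ ∃ a b : X,
    a ∈ T.leafSet (c₁ : V) ∧ b ∈ T.leafSet (c₂ : V) ∧ ({a, b} : Set X) ∈ L
  symm := by
    constructor
    rintro c₁ c₂ ⟨h, a, b, ha, hb, hm⟩
    exact ⟨Ne.symm h, b, a, hb, ha, by rw [Set.pair_comm]; exact hm⟩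
  loopless := by constructor; rintro c ⟨h, -⟩; exact h rfl

/-- `cl(T)`: the clusters of non-root interior vertices. -/
def clSet {X V : Type} (T : XTree X V) : Set (Set X) :=
  {A | ∃ v : V, v ≠ T.root ∧ T.Interior v ∧ A = T.leafSet v}

/-- A cluster marker map for `T` and the ordering of `X`:
`f A` is the `σ`-least element of `A` not used as marker of a proper subcluster. -/
def IsClusterMarker {X V : Type} [LinearOrder X] (T : XTree X V) (f : Set X → X) : Prop :=
  ∀ A ∈ clSet T,
    ((∃ B ∈ clSet T, B ⊂ A) →
      IsLeast (A \ {y | ∃ B ∈ clSet T, B ⊂ A ∧ f B = y}) (f A)) ∧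
    ((¬ ∃ B ∈ clSet T, B ⊂ A) → IsLeast A (f A))

/-- The marker of a child `c` of an interior vertex: the label of `c` if `c` is a leaf,
and `f (L(c))` if `c` is interior. -/
def markRel {X V : Type} (T : XTree X V) (f : Set X → X) (c : V) (a : X) : Prop :=
  T.leaf a = c ∨ (T.Interior c ∧ a = f (T.leafSet c))

/-- `L_{(T,f)}(v)`: all cords between markers of distinct children of `v`. -/
def lassoAt {X V : Type} (T : XTree X V) (f : Set X → X) (v : V) : Set (Set X) :=
  {c | ∃ c₁ c₂ : V, c₁ ∈ T.children v ∧ c₂ ∈ T.children v ∧ c₁ ≠ c₂ ∧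
    ∃ a b : X, markRel T f c₁ a ∧ markRel T f c₂ b ∧ c = {a, b}}

/-- `L_{(T,f)}`: the union over all interior vertices of `L_{(T,f)}(v)`. -/
def lassoFull {X V : Type} (T : XTree X V) (f : Set X → X) : Set (Set X) :=
  {c | ∃ v : V, T.Interior v ∧ c ∈ lassoAt T f v}

/-- An equidistant proper edge-weighting of `T`, encoded by the height function
`t v` = distance from `v` to any leaf below it (so all leaves are equidistant
from the root); properness: interior edges have positive weight. -/
def EquidistantProper {X V : Type} (T : XTree X V) (t : V → ℝ) : Prop :=
  (∀ x : X, t (T.leaf x) = 0) ∧ (∀ v : V, t v ≤ t (T.parent v)) ∧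
    ∀ v : V, v ≠ T.root → T.Interior v → t v < t (T.parent v)

/-- Equivalence of two `X`-trees: a root-, parent- and labelling-preserving bijection. -/
def TreeEquiv {X V V' : Type} (T : XTree X V) (T' : XTree X V') : Prop :=
  ∃ φ : V ≃ V', φ T.root = T'.root ∧ (∀ v, φ (T.parent v) = T'.parent (φ v)) ∧
    ∀ x, φ (T.leaf x) = T'.leaf x

/-- `S` is (equivalent to) the restriction `T|_Y`: the clusters of `S` are exactly the
nonempty traces on `Y` of the clusters of `T`. -/
def IsRestriction {X : Type} (Y : Set X) {V W : Type}
    (T : XTree X V) (S : XTree (↥Y) W) : Prop :=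
  ∀ A : Set X, A ⊆ Y →
    ((∃ w : W, A = Subtype.val '' S.leafSet w) ↔ (A.Nonempty ∧ ∃ v : V, A = T.leafSet v ∩ Y))

/-- The restriction `L|_Y` of a set of cords of `X` to cords of `Y`. -/
def restrictLasso {X : Type} (Y : Set X) (L : Set (Set X)) : Set (Set ↥Y) :=
  {c | ∃ a b : ↥Y, a ≠ b ∧ c = {a, b} ∧ ({(a : X), (b : X)} : Set X) ∈ L}


section Aux

namespace XTree

variable {X V : Type}

lemma iterate_root (T : XTree X V) (n : ℕ) : T.parent^[n] T.root = T.root :=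
  Function.iterate_fixed T.parent_root n

lemma desc_refl (T : XTree X V) (v : V) : T.Desc v v := ⟨0, rfl⟩

lemma desc_trans {T : XTree X V} {u v w : V} (h1 : T.Desc u v) (h2 : T.Desc v w) :
    T.Desc u w := by
  obtain ⟨n, hn⟩ := h1; obtain ⟨m, hm⟩ := h2
  exact ⟨n + m, by rw [Function.iterate_add_apply, hm, hn]⟩

lemma desc_antisymm {T : XTree X V} {v w : V} (h1 : T.Desc v w) (h2 : T.Desc w v) :
    v = w := by
  obtain ⟨n, hn⟩ := h1
  obtain ⟨m, hm⟩ := h2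
  have hp : T.parent^[n + m] v = v := by
    rw [Function.iterate_add_apply, hm, hn]
  rcases Nat.eq_zero_or_pos (n + m) with h0 | hpos
  · have hm0 : m = 0 := by omega
    subst hm0; simpa using hm
  · have hj : ∀ j : ℕ, T.parent^[j * (n + m)] v = v := by
      intro j; induction j with
      | zero => simp
      | succ j ih => rw [Nat.succ_mul, Function.iterate_add_apply, hp, ih]
    obtain ⟨k, hk⟩ := T.reaches v
    have hge : k ≤ k * (n + m) := Nat.le_mul_of_pos_right k hpos
    have hroot : v = T.root := by
      have h1 : T.parent^[k * (n + m)] v = T.root := by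
        rw [← Nat.sub_add_cancel hge, Function.iterate_add_apply, hk, iterate_root]
      rw [← hj k, h1]
    subst hroot
    rw [iterate_root] at hm
    exact hm

lemma desc_total {T : XTree X V} {a b w : V} (ha : T.Desc a w) (hb : T.Desc b w) :
    T.Desc a b ∨ T.Desc b a := by
  obtain ⟨n, hn⟩ := ha; obtain ⟨m, hm⟩ := hb
  rcases le_total n m with h | h
  · right
    refine ⟨m - n, ?_⟩
    rw [← hn, ← Function.iterate_add_apply, Nat.sub_add_cancel h, hm]
  · left
    refine ⟨n - m, ?_⟩
    rw [← hm, ← Function.iterate_add_apply, Nat.sub_add_cancel h, hn]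

lemma desc_of_child {T : XTree X V} {v c : V} (h : c ∈ T.children v) : T.Desc v c :=
  ⟨1, by simpa using h.1⟩

lemma not_desc_of_children {T : XTree X V} {v cA cB : V} (hA : cA ∈ T.children v)
    (hB : cB ∈ T.children v) (hAB : cA ≠ cB) : ¬ T.Desc cA cB := by
  rintro ⟨n, hn⟩
  match n, hn with
  | 0, hn => exact hAB hn.symm
  | (k+1), hn =>
    rw [Function.iterate_succ_apply, hB.1] at hn
    exact hA.2 (desc_antisymm ⟨k, hn⟩ (desc_of_child hA))

lemma children_disjoint {T : XTree X V} {v c₁ c₂ w : V} (h1 : c₁ ∈ T.children v)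
    (h2 : c₂ ∈ T.children v) (hne : c₁ ≠ c₂) (hd1 : T.Desc c₁ w) (hd2 : T.Desc c₂ w) :
    False := by
  rcases desc_total hd1 hd2 with h | h
  · exact not_desc_of_children h1 h2 hne h
  · exact not_desc_of_children h2 h1 hne.symm h

lemma leaf_childless (T : XTree X V) (x : X) : ∀ w, T.parent w = T.leaf x → w = T.leaf x :=
  (T.leaf_iff _).2 ⟨x, rfl⟩

lemma desc_leaf_eq {T : XTree X V} {x : X} {w : V} (h : T.Desc (T.leaf x) w) :
    w = T.leaf x := by
  obtain ⟨n, hn⟩ := h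
  induction n generalizing w with
  | zero => exact hn
  | succ n ih =>
    rw [Function.iterate_succ_apply] at hn
    exact T.leaf_childless x w (ih hn)

lemma leafSet_leaf (T : XTree X V) (x : X) : T.leafSet (T.leaf x) = {x} := by
  ext y
  simp only [leafSet, Set.mem_setOf_eq, Set.mem_singleton_iff]
  constructor
  · intro h
    exact T.leaf_inj (desc_leaf_eq h)
  · rintro rfl
    exact desc_refl _ _

lemma exists_child_desc_aux {T : XTree X V} {v u : V} (hne : u ≠ v) :
    ∀ n, T.parent^[n] u = v → ∃ c ∈ T.children v, T.Desc c u := by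
  intro n
  induction n with
  | zero => intro h; exact absurd h hne
  | succ n ih =>
    intro hn
    by_cases h2 : T.parent^[n] u = v
    · exact ih h2
    · rw [Function.iterate_succ_apply'] at hn
      exact ⟨T.parent^[n] u, ⟨hn, h2⟩, ⟨n, rfl⟩⟩

lemma exists_child_desc {T : XTree X V} {v u : V} (h : T.Desc v u) (hne : u ≠ v) :
    ∃ c ∈ T.children v, T.Desc c u := by
  obtain ⟨n, hn⟩ := h
  exact exists_child_desc_aux hne n hn

lemma descSet_child_lt [Fintype V] {T : XTree X V} {v c : V} (hc : c ∈ T.children v) :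
    {w | T.Desc c w}.ncard < {w | T.Desc v w}.ncard := by
  have hsub : {w | T.Desc c w} ⊆ {w | T.Desc v w} :=
    fun w hw => desc_trans (desc_of_child hc) hw
  have hvmem : v ∈ {w | T.Desc v w} := desc_refl T v
  have hvnot : v ∉ {w | T.Desc c w} := by
    intro h
    exact hc.2 (desc_antisymm h (desc_of_child hc))
  exact Set.ncard_lt_ncard ⟨hsub, fun hss => hvnot (hss hvmem)⟩ (Set.toFinite _)

lemma leafSet_mono {T : XTree X V} {v u : V} (h : T.Desc v u) :
    T.leafSet u ⊆ T.leafSet v := fun _ hx => desc_trans h hx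

lemma exists_leaf_mem [Fintype V] (T : XTree X V) (v : V) : (T.leafSet v).Nonempty := by
  suffices h : ∀ n (v : V), {w | T.Desc v w}.ncard ≤ n → (T.leafSet v).Nonempty by
    exact h _ v le_rfl
  intro n
  induction n with
  | zero =>
    intro v hv
    exfalso
    have h1 : {w | T.Desc v w}.ncard ≠ 0 := by
      have : {w | T.Desc v w}.Nonempty := ⟨v, desc_refl T v⟩
      simpa [Set.ncard_eq_zero (Set.toFinite _)] using this.ne_empty
    omega
  | succ n ih =>
    intro v hv
    by_cases hl : T.IsLeaf v
    · obtain ⟨x, rfl⟩ := hl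
      exact ⟨x, desc_refl _ _⟩
    · have h2 : ¬ ∀ w, T.parent w = v → w = v := fun h => hl ((T.leaf_iff v).1 h)
      push_neg at h2
      obtain ⟨c, hc1, hc2⟩ := h2
      have hcc : c ∈ T.children v := ⟨hc1, hc2⟩
      have := descSet_child_lt hcc
      obtain ⟨x, hx⟩ := ih c (by omega)
      exact ⟨x, desc_trans (desc_of_child hcc) hx⟩

lemma exists_other_child {T : XTree X V} (hph : T.IsPhylo) {w d : V}
    (hd : d ∈ T.children w) : ∃ d' ∈ T.children w, d' ≠ d := by
  have h2 : 2 ≤ (T.children w).ncard := by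
    by_cases hw : w = T.root
    · subst hw; exact hph.1
    · refine hph.2 w hw ?_
      rintro ⟨zz, rfl⟩
      exact hd.2 (T.leaf_childless zz d hd.1)
  obtain ⟨d', hd', hne⟩ := Set.exists_ne_of_one_lt_ncard (s := T.children w) (by omega) d
  exact ⟨d', hd', hne⟩

lemma child_unique {T : XTree X V} {v c c' w : V} (hc : c ∈ T.children v)
    (hc' : c' ∈ T.children v) (h : T.Desc c w) (h' : T.Desc c' w) : c = c' := by
  by_contra hne
  exact children_disjoint hc hc' hne h h'

lemma exists_lca_sep {T : XTree X V} {v₁ v₂ : V} (h1 : ¬ T.Desc v₁ v₂)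
    (h2 : ¬ T.Desc v₂ v₁) :
    ∃ u c₁ c₂ : V, c₁ ∈ T.children u ∧ c₂ ∈ T.children u ∧ c₁ ≠ c₂ ∧
      T.Desc c₁ v₁ ∧ T.Desc c₂ v₂ := by
  classical
  have hex : ∃ n, T.Desc (T.parent^[n] v₁) v₂ := by
    obtain ⟨n, hn⟩ := T.reaches v₁
    obtain ⟨m, hm⟩ := T.reaches v₂
    exact ⟨n, by rw [hn]; exact ⟨m, hm⟩⟩
  have hspec : T.Desc (T.parent^[Nat.find hex] v₁) v₂ := Nat.find_spec hex
  have hk0 : Nat.find hex ≠ 0 := by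
    intro h0
    apply h1
    simpa [h0] using hspec
  refine ⟨T.parent^[Nat.find hex] v₁, T.parent^[Nat.find hex - 1] v₁, ?_⟩
  have hpc₁ : T.parent (T.parent^[Nat.find hex - 1] v₁) = T.parent^[Nat.find hex] v₁ := by
    rw [← Function.iterate_succ_apply' T.parent]
    congr 1
    omega
  have hc₁u : T.parent^[Nat.find hex - 1] v₁ ≠ T.parent^[Nat.find hex] v₁ := by
    intro he
    exact Nat.find_min hex (show Nat.find hex - 1 < Nat.find hex by omega) (he ▸ hspec)
  have hv₂u : v₂ ≠ T.parent^[Nat.find hex] v₁ := by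
    intro he
    exact h2 (he ▸ ⟨Nat.find hex, rfl⟩)
  obtain ⟨c₂, hc₂, hdc₂⟩ := exists_child_desc hspec hv₂u
  refine ⟨c₂, ⟨hpc₁, hc₁u⟩, hc₂, ?_, ⟨Nat.find hex - 1, rfl⟩, hdc₂⟩
  intro he
  exact Nat.find_min hex (show Nat.find hex - 1 < Nat.find hex by omega) (he ▸ hdc₂)

end XTree



/-- Every good set extends to a block (finite graphs). -/
lemma exists_block_superset {α : Type} [Fintype α] {G : SimpleGraph α} {B : Set α}
    (hB : GoodSet G B) : ∃ C, IsBlock G C ∧ B ⊆ C := by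
  obtain ⟨C, hC, hmax⟩ := Set.Finite.exists_maximalFor Set.ncard
    {C : Set α | GoodSet G C ∧ B ⊆ C} (Set.toFinite _) ⟨B, hB, subset_rfl⟩
  refine ⟨C, ⟨hC.1, ?_⟩, hC.2⟩
  intro D hD hCD
  have hDmem : D ∈ {C : Set α | GoodSet G C ∧ B ⊆ C} := ⟨hD, hC.2.trans hCD⟩
  have hle : C.ncard ≤ D.ncard := Set.ncard_le_ncard hCD (Set.toFinite _)
  have := hmax hDmem hle
  exact Set.eq_of_subset_of_ncard_le hCD this.ge (Set.toFinite _)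


section WalkLemmas

variable {α : Type} {G : SimpleGraph α}

/-- A walk whose support lies in `s` gives reachability in the induced subgraph. -/
lemma reachable_induce_of_walk {s : Set α} :
    ∀ {x y : α} (W : G.Walk x y) (_ : ∀ z ∈ W.support, z ∈ s)
      (hx : x ∈ s) (hy : y ∈ s), (G.induce s).Reachable ⟨x, hx⟩ ⟨y, hy⟩ := by
  intro x y W
  induction W with
  | nil => intro _ hx hy; rfl
  | @cons x x' y h W ih =>
    intro hs hx hy
    have hx' : x' ∈ s := hs x' (by simp)
    have hadj : (G.induce s).Adj ⟨x, hx⟩ ⟨x', hx'⟩ := h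
    exact hadj.reachable.trans (ih (fun z hz => hs z (by simp [hz])) hx' hy)

/-- Extract a walk in `G` with support in `s` from a walk in `G.induce s`. -/
lemma walk_out {s : Set α} :
    ∀ {x y : ↥s} (_ : (G.induce s).Walk x y),
      ∃ W : G.Walk (x : α) (y : α), ∀ z ∈ W.support, z ∈ s := by
  intro x y W
  induction W with
  | nil => exact ⟨SimpleGraph.Walk.nil, by simp⟩
  | @cons x x' y h W ih =>
    obtain ⟨W', hW'⟩ := ih
    refine ⟨SimpleGraph.Walk.cons h W', ?_⟩
    intro z hz
    rcases List.mem_cons.1 (show z ∈ (x : α) :: W'.support from hz) with rfl | hz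
    · exact x.2
    · exact hW' z hz

lemma connected_induce_of_walks {s : Set α} {a : α} (ha : a ∈ s)
    (h : ∀ z ∈ s, ∃ W : G.Walk z a, ∀ t ∈ W.support, t ∈ s) :
    (G.induce s).Connected := by
  have : Nonempty ↥s := ⟨a, ha⟩
  refine ⟨fun x y => ?_⟩
  obtain ⟨Wx, hWx⟩ := h x x.2
  obtain ⟨Wy, hWy⟩ := h y y.2
  have h1 := reachable_induce_of_walk Wx hWx x.2 ha
  have h2 := reachable_induce_of_walk Wy hWy y.2 ha
  exact h1.trans h2.symm

lemma closed_mem_support_iff {v : α} (C : G.Walk v v) (h3 : 3 ≤ C.length) (z : α) :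
    z ∈ C.support ↔ z ∈ C.support.tail := by
  cases C with
  | nil => simp at h3
  | cons h p =>
    rw [SimpleGraph.Walk.support_cons]
    constructor
    · intro hz
      rcases List.mem_cons.1 hz with rfl | hz
      · exact p.end_mem_support
      · exact hz
    · exact fun hz => List.mem_cons_of_mem _ hz

/-- The support of a cycle is a good set. -/
lemma cycle_support_goodSet {v : α} (C : G.Walk v v) (hC : C.IsCycle) :
    GoodSet G {z | z ∈ C.support} := by
  refine ⟨⟨v, C.start_mem_support⟩, ?_, ?_⟩
  · refine connected_induce_of_walks (a := v) C.start_mem_support ?_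
    intro z hz
    exact ⟨(C.takeUntil z hz).reverse, fun t ht => by
      simpa using C.support_takeUntil_subset hz (by simpa using ht)⟩
  · intro w hw _
    obtain ⟨C', hC', hCsupp⟩ : ∃ C' : G.Walk w w, C'.IsCycle ∧
        ∀ z, z ∈ C'.support ↔ z ∈ C.support := by
      refine ⟨C.rotate w hw, (SimpleGraph.Walk.isCycle_rotate hw).2 hC, fun z => ?_⟩
      rw [closed_mem_support_iff _ ((SimpleGraph.Walk.isCycle_rotate hw).2 hC).three_le_length,
        closed_mem_support_iff _ hC.three_le_length]
      exact (C.support_rotate w hw).mem_iff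
    clear hw
    obtain ⟨z, h1, p, rfl⟩ : ∃ (z : α) (h1 : G.Adj w z) (p : G.Walk z w),
        C' = SimpleGraph.Walk.cons h1 p := by
      cases C' with
      | nil => exact absurd rfl hC'.ne_nil
      | cons h p => exact ⟨_, h, p, rfl⟩
    have hp : p.IsPath := by
      constructor
      · constructor
        have := hC'.isCircuit.isTrail.edges_nodup
        rw [SimpleGraph.Walk.edges_cons] at this
        exact (List.nodup_cons.1 this).2
      · have := hC'.support_nodup
        rwa [SimpleGraph.Walk.support_cons, List.tail_cons] at this
    have hwz : w ≠ z := h1.ne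
    obtain ⟨z2, h2, q, hq⟩ := SimpleGraph.Walk.exists_eq_cons_of_ne hwz p.reverse
    have hwq : w ∉ q.support := by
      have := hp.reverse.support_nodup
      rw [hq, SimpleGraph.Walk.support_cons] at this
      exact (List.nodup_cons.1 this).1
    have hpsup : ∀ t, t ∈ p.support ↔ t = w ∨ t ∈ q.support := by
      intro t
      rw [← List.mem_reverse, ← SimpleGraph.Walk.support_reverse, hq,
        SimpleGraph.Walk.support_cons, List.mem_cons]
    have hset : {t | t ∈ (SimpleGraph.Walk.cons h1 p).support} \ {w} = {t | t ∈ q.support} := by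
      ext t
      simp only [Set.mem_diff, Set.mem_setOf_eq, Set.mem_singleton_iff,
        SimpleGraph.Walk.support_cons, List.mem_cons, hpsup t]
      constructor
      · rintro ⟨h', hne⟩
        rcases h' with rfl | (rfl | h') <;> first | exact absurd rfl hne | exact h'
      · intro ht
        exact ⟨Or.inr (Or.inr ht), fun h' => hwq (h' ▸ ht)⟩
    have hset2 : {t | t ∈ C.support} \ {w} = {t | t ∈ q.support} := by
      rw [← hset]
      ext t
      simp only [Set.mem_diff, Set.mem_setOf_eq, hCsupp t]
    rw [hset2]
    refine connected_induce_of_walks (a := z) q.end_mem_support ?_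
    intro t ht
    exact ⟨q.dropUntil t ht, fun r hr => q.support_dropUntil_subset ht hr⟩

/-- In a block graph, the support of any cycle is a clique. -/
lemma cycle_support_clique [Fintype α] (hbg : IsBlockGraph G) {v : α} (C : G.Walk v v)
    (hC : C.IsCycle) {x y : α} (hx : x ∈ C.support) (hy : y ∈ C.support)
    (hxy : x ≠ y) : G.Adj x y := by
  obtain ⟨B, hB, hsub⟩ := exists_block_superset (cycle_support_goodSet C hC)
  exact hbg B hB (hsub hx) (hsub hy) hxy

/-- Walking towards a vertex outside `P`, there is a last exit from `P`. -/
lemma last_exit {P : Set α} :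
    ∀ {r q : α} (R : G.Walk r q), q ∉ P → ∀ x₀ ∈ R.support, x₀ ∈ P →
    ∃ (x y : α) (R₂ : G.Walk y q), x ∈ P ∧ G.Adj x y ∧ (∀ z ∈ R₂.support, z ∉ P) ∧
      x ∈ R.support ∧ ∀ z ∈ R₂.support, z ∈ R.support := by
  intro r q R
  induction R with
  | nil =>
    intro hq x₀ hx₀ hx₀P
    simp only [SimpleGraph.Walk.support_nil, List.mem_singleton] at hx₀
    exact absurd (hx₀ ▸ hx₀P) hq
  | @cons r w q h R ih =>
    intro hq x₀ hx₀ hx₀P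
    by_cases hPin : ∃ z ∈ R.support, z ∈ P
    · obtain ⟨z, hz, hzP⟩ := hPin
      obtain ⟨x, y, R₂, h1, h2, h3, h4, h5⟩ := ih hq z hz hzP
      exact ⟨x, y, R₂, h1, h2, h3, by simp [h4], fun t ht => by simp [h5 t ht]⟩
    · push_neg at hPin
      have hx₀r : x₀ = r := by
        rcases List.mem_cons.1 (by simpa using hx₀) with rfl | hx₀'
        · rfl
        · exact absurd hx₀P (hPin x₀ hx₀')
      refine ⟨r, w, R, hx₀r ▸ hx₀P, h, hPin, by simp, fun t ht => by simp [ht]⟩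

end WalkLemmas

open XTree in
/-- Inside the subtree below `v`, any two leaf labels are joined by a walk of the
cord graph staying below `v`. -/
lemma exists_walk_in_leafSet {Z W : Type} [Fintype W] (S : XTree Z W)
    (L' : Set (Set Z)) (hl : S.IsTopoLasso L') :
    ∀ (v : W) {a b : Z}, a ∈ S.leafSet v → b ∈ S.leafSet v →
      ∃ Wk : (cordGraph L').Walk a b, ∀ z ∈ Wk.support, z ∈ S.leafSet v := by
  suffices h : ∀ n, ∀ v : W, {w | S.Desc v w}.ncard ≤ n → ∀ a b : Z,
      a ∈ S.leafSet v → b ∈ S.leafSet v →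
      ∃ Wk : (cordGraph L').Walk a b, ∀ z ∈ Wk.support, z ∈ S.leafSet v by
    intro v a b ha hb
    exact h _ v le_rfl _ _ ha hb
  intro n
  induction n with
  | zero =>
    intro v hv a b _ _
    exfalso
    have h1 : {w | S.Desc v w}.ncard ≠ 0 := by
      have : {w | S.Desc v w}.Nonempty := ⟨v, desc_refl S v⟩
      simpa [Set.ncard_eq_zero (Set.toFinite _)] using this.ne_empty
    omega
  | succ n ih =>
    intro v hv a b ha hb
    by_cases hab : a = b
    · subst hab
      exact ⟨SimpleGraph.Walk.nil, by simpa using ha⟩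
    have hva : S.leaf a ≠ v := by
      rintro rfl
      have := (S.leafSet_leaf a).symm ▸ hb
      exact hab (this.symm)
    have hvb : S.leaf b ≠ v := by
      rintro rfl
      have := (S.leafSet_leaf b).symm ▸ ha
      exact hab this
    obtain ⟨ca, hca, hda⟩ := exists_child_desc ha hva
    obtain ⟨cb, hcb, hdb⟩ := exists_child_desc hb hvb
    have hale : {w | S.Desc ca w}.ncard ≤ n := by
      have := descSet_child_lt hca; omega
    have hble : {w | S.Desc cb w}.ncard ≤ n := by
      have := descSet_child_lt hcb; omega
    by_cases hcc : ca = cb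
    · subst hcc
      obtain ⟨Wk, hWk⟩ := ih ca hale a b hda hdb
      exact ⟨Wk, fun z hz => leafSet_mono (desc_of_child hca) (hWk z hz)⟩
    · obtain ⟨p, q, hp, hq, hpq⟩ := hl v ca cb hca hcb hcc
      have hpqne : p ≠ q := by
        rintro rfl
        exact children_disjoint hca hcb hcc hp hq
      have hedge : (cordGraph L').Adj p q := ⟨hpqne, hpq⟩
      obtain ⟨Wa, hWa⟩ := ih ca hale a p hda hp
      obtain ⟨Wb, hWb⟩ := ih cb hble q b hq hdb
      refine ⟨Wa.append (SimpleGraph.Walk.cons hedge Wb), ?_⟩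
      intro z hz
      rw [SimpleGraph.Walk.support_append, List.mem_append] at hz
      rcases hz with hz | hz
      · exact leafSet_mono (desc_of_child hca) (hWa z hz)
      · rw [SimpleGraph.Walk.support_cons, List.tail_cons] at hz
        exact leafSet_mono (desc_of_child hcb) (hWb z hz)

open XTree in
lemma reachable_of_topoLasso {Z W : Type} [Fintype W] (S : XTree Z W)
    (L' : Set (Set Z)) (hl : S.IsTopoLasso L') (a b : Z) :
    (cordGraph L').Reachable a b := by
  have ha : a ∈ S.leafSet S.root := S.reaches _
  have hb : b ∈ S.leafSet S.root := S.reaches _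
  obtain ⟨Wk, -⟩ := exists_walk_in_leafSet S L' hl S.root ha hb
  exact ⟨Wk⟩


section CrossStructure

open XTree

variable {X V : Type}

/-- The cord `{a,b}` crosses at `u` between the distinct children `c₁, c₂`. -/
def CrossAt (T : XTree X V) (a b : X) (u c₁ c₂ : V) : Prop :=
  c₁ ∈ T.children u ∧ c₂ ∈ T.children u ∧ c₁ ≠ c₂ ∧
    a ∈ T.leafSet c₁ ∧ b ∈ T.leafSet c₂

lemma exists_crossAt {T : XTree X V} {a b : X} (hab : a ≠ b) :
    ∃ u c₁ c₂ : V, CrossAt T a b u c₁ c₂ := by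
  have h1 : ¬ T.Desc (T.leaf a) (T.leaf b) := by
    intro h
    exact hab (T.leaf_inj (desc_leaf_eq h)).symm
  have h2 : ¬ T.Desc (T.leaf b) (T.leaf a) := by
    intro h
    exact hab (T.leaf_inj (desc_leaf_eq h))
  obtain ⟨u, c₁, c₂, hc₁, hc₂, hne, hd₁, hd₂⟩ := exists_lca_sep h1 h2
  exact ⟨u, c₁, c₂, hc₁, hc₂, hne, hd₁, hd₂⟩

lemma crossAt_unique {T : XTree X V} {a b : X} {u c₁ c₂ u' c₁' c₂' : V}
    (h : CrossAt T a b u c₁ c₂) (h' : CrossAt T a b u' c₁' c₂') :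
    u = u' ∧ c₁ = c₁' ∧ c₂ = c₂' := by
  obtain ⟨hc₁, hc₂, hne, ha, hb⟩ := h
  obtain ⟨hc₁', hc₂', hne', ha', hb'⟩ := h'
  have hda : T.Desc u (T.leaf a) := desc_trans (desc_of_child hc₁) ha
  have hda' : T.Desc u' (T.leaf a) := desc_trans (desc_of_child hc₁') ha'
  have hdb : T.Desc u (T.leaf b) := desc_trans (desc_of_child hc₂) hb
  have hdb' : T.Desc u' (T.leaf b) := desc_trans (desc_of_child hc₂') hb'
  have huu' : u = u' := by
    rcases desc_total hda hda' with h | h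
    · by_contra hne''
      obtain ⟨e, he, hde⟩ := exists_child_desc h (Ne.symm hne'')
      have he₁ : e = c₁ := child_unique he hc₁ (desc_trans hde (desc_trans (desc_of_child hc₁') ha')) ha
      have he₂ : e = c₂ := child_unique he hc₂ (desc_trans hde (desc_trans (desc_of_child hc₂') hb')) hb
      exact hne (he₁ ▸ he₂ ▸ rfl)
    · by_contra hne''
      obtain ⟨e, he, hde⟩ := exists_child_desc h hne''
      have he₁ : e = c₁' := child_unique he hc₁' (desc_trans hde (desc_trans (desc_of_child hc₁) ha)) ha'
      have he₂ : e = c₂' := child_unique he hc₂' (desc_trans hde (desc_trans (desc_of_child hc₂) hb)) hb'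
      exact hne' (he₁ ▸ he₂ ▸ rfl)
  subst huu'
  exact ⟨rfl, child_unique hc₁ hc₁' ha ha', child_unique hc₂ hc₂' hb hb'⟩

/-- From minimality: the cord crossing between a given pair of children is unique. -/
lemma cross_cord_unique {T : XTree X V} {L : Set (Set X)} (hmin : T.IsMinTopoLasso L)
    {a b a' b' : X} {u c₁ c₂ : V}
    (hab : ({a, b} : Set X) ∈ L) (h : CrossAt T a b u c₁ c₂)
    (hab' : ({a', b'} : Set X) ∈ L) (h' : CrossAt T a' b' u c₁ c₂) :
    a = a' ∧ b = b' := by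
  obtain ⟨hc₁, hc₂, hne, ha, hb⟩ := h
  obtain ⟨-, -, -, ha', hb'⟩ := h'
  by_cases heq : ({a, b} : Set X) = ({a', b'} : Set X)
  · have haa : a = a' := by
      have : a ∈ ({a', b'} : Set X) := heq ▸ (by simp : a ∈ ({a, b} : Set X))
      rcases this with h1 | h1
      · exact h1
      · exfalso
        rw [Set.mem_singleton_iff] at h1
        exact children_disjoint hc₁ hc₂ hne ha (h1 ▸ hb')
    refine ⟨haa, ?_⟩
    have : b ∈ ({a', b'} : Set X) := heq ▸ (by simp : b ∈ ({a, b} : Set X))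
    rcases this with h1 | h1
    · exfalso
      exact children_disjoint hc₁ hc₂ hne (h1 ▸ ha') hb
    · rwa [Set.mem_singleton_iff] at h1
  · exfalso
    have hlasso : T.IsTopoLasso (L \ {({a, b} : Set X)}) := by
      intro v d₁ d₂ hd₁ hd₂ hdne
      obtain ⟨p, q, hp, hq, hpq⟩ := hmin.1 v d₁ d₂ hd₁ hd₂ hdne
      by_cases hc : ({p, q} : Set X) = ({a, b} : Set X)
      · have hpqne : p ≠ q := by
          rintro rfl
          exact children_disjoint hd₁ hd₂ hdne hp hq
        rcases Set.pair_eq_pair_iff.1 hc with ⟨rfl, rfl⟩ | ⟨rfl, rfl⟩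
        · -- p = a, q = b : the crossing of {a,b} is at (v,d₁,d₂) = (u,c₁,c₂)
          obtain ⟨-, h1, h2⟩ := crossAt_unique
            (⟨hd₁, hd₂, hdne, hp, hq⟩ : CrossAt T p q v d₁ d₂)
            (⟨hc₁, hc₂, hne, ha, hb⟩ : CrossAt T p q u c₁ c₂)
          refine ⟨a', b', h1 ▸ ha', h2 ▸ hb', hab', fun hmem => heq ?_⟩
          rw [Set.mem_singleton_iff] at hmem
          exact hmem.symm
        · obtain ⟨-, h1, h2⟩ := crossAt_unique
            (⟨hd₁, hd₂, hdne, hp, hq⟩ : CrossAt T p q v d₁ d₂)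
            (⟨hc₂, hc₁, Ne.symm hne, hb, ha⟩ : CrossAt T p q u c₂ c₁)
          refine ⟨b', a', h1 ▸ hb', h2 ▸ ha', ?_, fun hmem => heq ?_⟩
          · rwa [Set.pair_comm]
          · rw [Set.mem_singleton_iff, Set.pair_comm b' a'] at hmem
            exact hmem.symm
      · exact ⟨p, q, hp, hq, hpq, hc⟩
    have hLL := hmin.2 _ Set.diff_subset hlasso
    rw [← hLL] at hab
    exact hab.2 rfl

/-- Key connectivity lemma: if `Γ(L)` induced on `Y` is connected and both child
subtrees at a crossing have leaves in `Y`, then the marker cord endpoints lie in `Y`. -/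
lemma marker_in_Y [Fintype X] [Fintype V] {T : XTree X V} {L : Set (Set X)}
    (hmin : T.IsMinTopoLasso L) (hbg : IsBlockGraph (cordGraph L))
    {Y : Set X} (hconn : ((cordGraph L).induce Y).Connected)
    {u c₁ c₂ : V} (hc₁ : c₁ ∈ T.children u) (hc₂ : c₂ ∈ T.children u) (hne : c₁ ≠ c₂)
    {m₁ m₂ : X} (hm₁ : m₁ ∈ T.leafSet c₁) (hm₂ : m₂ ∈ T.leafSet c₂)
    (hmem : ({m₁, m₂} : Set X) ∈ L)
    {p q : X} (hp : p ∈ T.leafSet c₁ ∩ Y) (hq : q ∈ T.leafSet c₂ ∩ Y) :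
    m₁ ∈ Y := by
  classical
  have hPQ : ∀ z, z ∈ T.leafSet c₁ → z ∈ T.leafSet c₂ → False :=
    fun z h h' => children_disjoint hc₁ hc₂ hne h h'
  have key : ∀ x' y', x' ∈ T.leafSet c₁ → y' ∈ T.leafSet c₂ →
      (cordGraph L).Adj x' y' → x' = m₁ := by
    intro x' y' hx' hy' hadj
    exact (cross_cord_unique hmin hadj.2 ⟨hc₁, hc₂, hne, hx', hy'⟩
      hmem ⟨hc₁, hc₂, hne, hm₁, hm₂⟩).1
  obtain ⟨R0⟩ := hconn.preconnected ⟨p, hp.2⟩ ⟨q, hq.2⟩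
  obtain ⟨R, hRY⟩ := walk_out R0
  suffices hm : m₁ ∈ R.support by exact hRY m₁ hm
  by_contra hm
  have hqP : q ∉ T.leafSet c₁ := fun h => hPQ q h hq.1
  obtain ⟨x, y, R₂, hxP, hxy, hR₂P, hxR, hR₂R⟩ :=
    last_exit R hqP p R.start_mem_support hp.1
  have hxm : x ≠ m₁ := fun h => hm (h ▸ hxR)
  by_cases hyQ : y ∈ T.leafSet c₂
  · exact absurd (key x y hxP hyQ hxy) hxm
  have hqR2 : q ∈ R₂.reverse.support := R₂.reverse.start_mem_support
  obtain ⟨b, y2, R₃, hbQ, hby2, hR₃Q, hbR2, hR₃R2⟩ :=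
    last_exit R₂.reverse (show y ∉ T.leafSet c₂ from hyQ) q hqR2 hq.1
  obtain ⟨σ₁, hσ₁⟩ := exists_walk_in_leafSet T L hmin.1 c₁ hm₁ hxP
  obtain ⟨σ₃, hσ₃⟩ := exists_walk_in_leafSet T L hmin.1 c₂ hbQ hm₂
  have hσ₁P : ∀ z ∈ σ₁.bypass.support, z ∈ T.leafSet c₁ :=
    fun z hz => hσ₁ z (σ₁.support_bypass_subset hz)
  have hσ₃Q : ∀ z ∈ σ₃.bypass.support, z ∈ T.leafSet c₂ :=
    fun z hz => hσ₃ z (σ₃.support_bypass_subset hz)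
  have hμ : ∀ z ∈ R₃.reverse.bypass.support, z ∉ T.leafSet c₁ ∧ z ∉ T.leafSet c₂ := by
    intro z hz
    have hz' : z ∈ R₃.support := by
      have := R₃.reverse.support_bypass_subset hz
      rwa [SimpleGraph.Walk.support_reverse, List.mem_reverse] at this
    have hz2 : z ∈ R₂.support := by
      have := hR₃R2 z hz'
      rwa [SimpleGraph.Walk.support_reverse, List.mem_reverse] at this
    exact ⟨hR₂P z hz2, hR₃Q z hz'⟩
  have hy2b : (cordGraph L).Adj y2 b := hby2.symm
  set W : (cordGraph L).Walk m₁ m₂ :=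
    σ₁.bypass.append (SimpleGraph.Walk.cons hxy
      (R₃.reverse.bypass.append (SimpleGraph.Walk.cons hy2b σ₃.bypass))) with hW
  have hWsup : W.support =
      σ₁.bypass.support ++ (R₃.reverse.bypass.support ++ σ₃.bypass.support) := by
    rw [hW, SimpleGraph.Walk.support_append, SimpleGraph.Walk.support_cons,
      List.tail_cons, SimpleGraph.Walk.support_append, SimpleGraph.Walk.support_cons,
      List.tail_cons]
  have hWpath : W.IsPath := by
    apply SimpleGraph.Walk.IsPath.mk'
    rw [hWsup]
    refine List.Nodup.append σ₁.bypass_isPath.support_nodup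
      (List.Nodup.append R₃.reverse.bypass_isPath.support_nodup
        σ₃.bypass_isPath.support_nodup ?_) ?_
    · intro z hz hz'
      exact (hμ z hz).2 (hσ₃Q z hz')
    · intro z hz hz'
      rcases List.mem_append.1 hz' with h' | h'
      · exact (hμ z h').1 (hσ₁P z hz)
      · exact hPQ z (hσ₁P z hz) (hσ₃Q z h')
  have hy2P : y2 ∉ T.leafSet c₁ ∧ y2 ∉ T.leafSet c₂ :=
    hμ y2 R₃.reverse.bypass.end_mem_support
  have hm₂m₁ : (cordGraph L).Adj m₂ m₁ := by
    refine ⟨fun h => hPQ m₁ hm₁ (h ▸ hm₂), ?_⟩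
    rwa [Set.pair_comm]
  have hWedges : W.edges = σ₁.bypass.edges ++ (s(x, y) ::
      (R₃.reverse.bypass.edges ++ (s(y2, b) :: σ₃.bypass.edges))) := by
    rw [hW, SimpleGraph.Walk.edges_append, SimpleGraph.Walk.edges_cons,
      SimpleGraph.Walk.edges_append, SimpleGraph.Walk.edges_cons]
  have hne_edge : s(m₂, m₁) ∉ W.edges := by
    rw [hWedges]
    intro hmem'
    rcases List.mem_append.1 hmem' with h' | h'
    · exact hPQ m₂ (hσ₁P m₂ (σ₁.bypass.fst_mem_support_of_mem_edges h')) hm₂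
    rcases List.mem_cons.1 h' with h' | h'
    · rcases Sym2.eq_iff.1 h' with ⟨h1, h2⟩ | ⟨h1, h2⟩
      · exact hPQ x hxP (h1 ▸ hm₂)
      · exact hxm (h2.symm)
    rcases List.mem_append.1 h' with h' | h'
    · exact (hμ m₂ (R₃.reverse.bypass.fst_mem_support_of_mem_edges h')).2 hm₂
    rcases List.mem_cons.1 h' with h' | h'
    · rcases Sym2.eq_iff.1 h' with ⟨h1, h2⟩ | ⟨h1, h2⟩
      · exact hy2P.2 (h1 ▸ hm₂)
      · exact hy2P.1 (h2 ▸ hm₁)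
    · exact hPQ m₁ hm₁ (hσ₃Q m₁ (σ₃.bypass.snd_mem_support_of_mem_edges h'))
  have hcyc := SimpleGraph.Path.cons_isCycle ⟨W, hWpath⟩ hm₂m₁ hne_edge
  have hxW : x ∈ W.support := by
    rw [hWsup]
    exact List.mem_append_left _ σ₁.bypass.end_mem_support
  have hxC : x ∈ (SimpleGraph.Walk.cons hm₂m₁ (W : (cordGraph L).Walk m₁ m₂)).support := by
    rw [SimpleGraph.Walk.support_cons]
    exact List.mem_cons_of_mem _ hxW
  have hm₂C : m₂ ∈ (SimpleGraph.Walk.cons hm₂m₁ (W : (cordGraph L).Walk m₁ m₂)).support := by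
    rw [SimpleGraph.Walk.support_cons]
    exact List.mem_cons_self
  have hxm₂ : x ≠ m₂ := fun h => hPQ x hxP (h ▸ hm₂)
  have hadjxm₂ := cycle_support_clique hbg _ hcyc hxC hm₂C hxm₂
  exact absurd (key x m₂ hxP hm₂ hadjxm₂) hxm

end CrossStructure


section Restriction

open XTree

variable {X V W : Type} [Fintype X] [Fintype V] [Fintype W]
variable {Y : Set X} {T : XTree X V} {S : XTree (↥Y) W}

lemma trace_of_Svertex (hres : IsRestriction Y T S) (w : W) :
    ∃ v : V, Subtype.val '' S.leafSet w = T.leafSet v ∩ Y :=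
  ((hres _ (by rintro x ⟨xh, -, rfl⟩; exact xh.2)).1 ⟨w, rfl⟩).2

lemma Svertex_of_trace (hres : IsRestriction Y T S) {v : V}
    (hne : (T.leafSet v ∩ Y).Nonempty) :
    ∃ w : W, Subtype.val '' S.leafSet w = T.leafSet v ∩ Y := by
  obtain ⟨w, hw⟩ := (hres _ Set.inter_subset_right).2 ⟨hne, v, rfl⟩
  exact ⟨w, hw.symm⟩

lemma mem_S_of_val {A : Set ↥Y} {xh : ↥Y} (h : (xh : X) ∈ Subtype.val '' A) : xh ∈ A := by
  obtain ⟨t, ht, hte⟩ := h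
  rwa [Subtype.coe_injective hte] at ht

/-- If the trace of `c` contains the cluster of `d₁` and misses the cluster of the
sibling `d₂`, then the trace of `c` equals the cluster of `d₁`. -/
lemma trace_eq_of (hres : IsRestriction Y T S)
    {w d₁ d₂ : W} (hd₁ : d₁ ∈ S.children w) (hd₂ : d₂ ∈ S.children w) (hne : d₁ ≠ d₂)
    {c : V} (hsub : Subtype.val '' S.leafSet d₁ ⊆ T.leafSet c ∩ Y)
    (hdisj : ∀ x ∈ T.leafSet c ∩ Y, x ∉ Subtype.val '' S.leafSet d₂) :
    T.leafSet c ∩ Y = Subtype.val '' S.leafSet d₁ := by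
  obtain ⟨xh0, hxh0⟩ := S.exists_leaf_mem d₁
  have htrne : (T.leafSet c ∩ Y).Nonempty := ⟨xh0, hsub ⟨xh0, hxh0, rfl⟩⟩
  obtain ⟨w₁, hw₁⟩ := Svertex_of_trace hres htrne
  have hsub1 : S.leafSet d₁ ⊆ S.leafSet w₁ := by
    rw [← Set.image_subset_image_iff Subtype.coe_injective, hw₁]
    exact hsub
  obtain ⟨yh, hyh⟩ := S.exists_leaf_mem d₂
  have hw₁d₁ : S.leafSet w₁ ⊆ S.leafSet d₁ := by
    have hxw : xh0 ∈ S.leafSet w := leafSet_mono (desc_of_child hd₁) hxh0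
    have hnotsub : ¬ S.leafSet w ⊆ S.leafSet w₁ := by
      intro hss
      refine hdisj yh ?_ ⟨yh, hyh, rfl⟩
      rw [← hw₁]
      exact ⟨yh, hss (leafSet_mono (desc_of_child hd₂) hyh), rfl⟩
    rcases desc_total (hsub1 hxh0) hxw with h | h
    · exact absurd (leafSet_mono h) hnotsub
    · have hwne : w₁ ≠ w := by
        rintro rfl
        exact hnotsub subset_rfl
      obtain ⟨d, hd, hdw₁⟩ := exists_child_desc h hwne
      have hdd : d = d₁ := child_unique hd hd₁ (desc_trans hdw₁ (hsub1 hxh0)) hxh0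
      exact hdd ▸ leafSet_mono hdw₁
  rw [← hw₁]
  exact congrArg (Set.image Subtype.val) (Set.Subset.antisymm hw₁d₁ hsub1)

/-- For distinct children `d₁, d₂` of a vertex of `S`, find a vertex `u` of `T` and
distinct children whose traces are exactly the two clusters. -/
lemma restrict_children_correspond (hres : IsRestriction Y T S)
    {w d₁ d₂ : W} (hd₁ : d₁ ∈ S.children w) (hd₂ : d₂ ∈ S.children w) (hne : d₁ ≠ d₂) :
    ∃ u c₁ c₂ : V, c₁ ∈ T.children u ∧ c₂ ∈ T.children u ∧ c₁ ≠ c₂ ∧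
      T.leafSet c₁ ∩ Y = Subtype.val '' S.leafSet d₁ ∧
      T.leafSet c₂ ∩ Y = Subtype.val '' S.leafSet d₂ := by
  obtain ⟨v₁, hv₁⟩ := trace_of_Svertex hres d₁
  obtain ⟨v₂, hv₂⟩ := trace_of_Svertex hres d₂
  have hdisj : ∀ xh : ↥Y, xh ∈ S.leafSet d₁ → xh ∈ S.leafSet d₂ → False :=
    fun xh h h' => children_disjoint hd₁ hd₂ hne h h'
  obtain ⟨xh1, hxh1⟩ := S.exists_leaf_mem d₁
  obtain ⟨xh2, hxh2⟩ := S.exists_leaf_mem d₂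
  have h12 : ¬ T.Desc v₁ v₂ := by
    intro h
    have : ((xh2 : X)) ∈ Subtype.val '' S.leafSet d₁ := by
      rw [hv₁]
      have : ((xh2 : X)) ∈ T.leafSet v₂ ∩ Y := by
        rw [← hv₂]; exact ⟨xh2, hxh2, rfl⟩
      exact ⟨leafSet_mono h this.1, this.2⟩
    exact hdisj xh2 (mem_S_of_val this) hxh2
  have h21 : ¬ T.Desc v₂ v₁ := by
    intro h
    have : ((xh1 : X)) ∈ Subtype.val '' S.leafSet d₂ := by
      rw [hv₂]
      have : ((xh1 : X)) ∈ T.leafSet v₁ ∩ Y := by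
        rw [← hv₁]; exact ⟨xh1, hxh1, rfl⟩
      exact ⟨leafSet_mono h this.1, this.2⟩
    exact hdisj xh1 hxh1 (mem_S_of_val this)
  obtain ⟨u, c₁, c₂, hc₁, hc₂, hcne, hdc₁, hdc₂⟩ := exists_lca_sep h12 h21
  have hsubtr₁ : Subtype.val '' S.leafSet d₁ ⊆ T.leafSet c₁ ∩ Y := by
    rw [hv₁]
    exact fun x hx => ⟨leafSet_mono hdc₁ hx.1, hx.2⟩
  have hsubtr₂ : Subtype.val '' S.leafSet d₂ ⊆ T.leafSet c₂ ∩ Y := by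
    rw [hv₂]
    exact fun x hx => ⟨leafSet_mono hdc₂ hx.1, hx.2⟩
  refine ⟨u, c₁, c₂, hc₁, hc₂, hcne, ?_, ?_⟩
  · refine trace_eq_of hres hd₁ hd₂ hne hsubtr₁ ?_
    intro x hx hx'
    exact children_disjoint hc₁ hc₂ hcne hx.1 (hsubtr₂ hx').1
  · refine trace_eq_of hres hd₂ hd₁ (Ne.symm hne) hsubtr₂ ?_
    intro x hx hx'
    exact children_disjoint hc₁ hc₂ hcne (hsubtr₁ hx').1 hx.1

/-- Conversely, a crossing of `T` with both marker leaves in `Y` comes from a pair of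
distinct children of a vertex of `S`. -/
lemma cross_children_correspond (hSph : S.IsPhylo) (hres : IsRestriction Y T S)
    {x : V} {e₁ e₂ : V} (he₁ : e₁ ∈ T.children x) (he₂ : e₂ ∈ T.children x)
    (hene : e₁ ≠ e₂) {a b : X} (ha : a ∈ T.leafSet e₁) (haY : a ∈ Y)
    (hb : b ∈ T.leafSet e₂) (hbY : b ∈ Y) :
    ∃ w d₁ d₂ : W, d₁ ∈ S.children w ∧ d₂ ∈ S.children w ∧ d₁ ≠ d₂ ∧
      (Subtype.val '' S.leafSet d₁ ⊆ T.leafSet e₁) ∧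
      (Subtype.val '' S.leafSet d₂ ⊆ T.leafSet e₂) ∧
      (⟨a, haY⟩ : ↥Y) ∈ S.leafSet d₁ ∧ (⟨b, hbY⟩ : ↥Y) ∈ S.leafSet d₂ := by
  have hax : a ∈ T.leafSet x := leafSet_mono (desc_of_child he₁) ha
  have hbx : b ∈ T.leafSet x := leafSet_mono (desc_of_child he₂) hb
  obtain ⟨wx, hwx⟩ := Svertex_of_trace hres (⟨a, hax, haY⟩ : (T.leafSet x ∩ Y).Nonempty)
  obtain ⟨w₁, hw₁⟩ := Svertex_of_trace hres (⟨a, ha, haY⟩ : (T.leafSet e₁ ∩ Y).Nonempty)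
  obtain ⟨w₂, hw₂⟩ := Svertex_of_trace hres (⟨b, hb, hbY⟩ : (T.leafSet e₂ ∩ Y).Nonempty)
  have hah : (⟨a, haY⟩ : ↥Y) ∈ S.leafSet w₁ :=
    mem_S_of_val (by rw [hw₁]; exact ⟨ha, haY⟩)
  have hbh : (⟨b, hbY⟩ : ↥Y) ∈ S.leafSet w₂ :=
    mem_S_of_val (by rw [hw₂]; exact ⟨hb, hbY⟩)
  have hahx : (⟨a, haY⟩ : ↥Y) ∈ S.leafSet wx :=
    mem_S_of_val (by rw [hwx]; exact ⟨hax, haY⟩)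
  have hbhx : (⟨b, hbY⟩ : ↥Y) ∈ S.leafSet wx :=
    mem_S_of_val (by rw [hwx]; exact ⟨hbx, hbY⟩)
  -- find the child of `wx` below which `w₁` sits
  have step : ∀ (e : V) (wi : W) (yh : ↥Y), e ∈ T.children x →
      Subtype.val '' S.leafSet wi = T.leafSet e ∩ Y → yh ∈ S.leafSet wi →
      yh ∈ S.leafSet wx → ∃ d ∈ S.children wx, S.leafSet wi ⊆ S.leafSet d := by
    intro e wi yh he hwi hyh hyhx
    have hnotsub : ¬ S.leafSet wx ⊆ S.leafSet wi := by
      intro hss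
      -- then trace x ⊆ trace e, impossible since the other child has a `Y`-leaf
      have h1 : T.leafSet x ∩ Y ⊆ T.leafSet e ∩ Y := by
        rw [← hwx, ← hwi]
        exact Set.image_mono hss
      rcases child_unique he he₁ (h1 ⟨hax, haY⟩).1 ha with rfl
      exact children_disjoint he he₂ hene (h1 ⟨hbx, hbY⟩).1 hb
    rcases desc_total hyhx hyh with h | h
    · have hwne : wi ≠ wx := by
        rintro rfl
        exact hnotsub subset_rfl
      obtain ⟨d, hd, hdwi⟩ := exists_child_desc h hwne
      exact ⟨d, hd, leafSet_mono hdwi⟩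
    · exact absurd (leafSet_mono h) hnotsub
  obtain ⟨d₁, hd₁, hsubd₁⟩ := step e₁ w₁ ⟨a, haY⟩ he₁ hw₁ hah hahx
  obtain ⟨d₂, hd₂, hsubd₂⟩ := step e₂ w₂ ⟨b, hbY⟩ he₂ hw₂ hbh hbhx
  have hain : (⟨a, haY⟩ : ↥Y) ∈ S.leafSet d₁ := hsubd₁ hah
  have hbin : (⟨b, hbY⟩ : ↥Y) ∈ S.leafSet d₂ := hsubd₂ hbh
  have dich₁ : (Subtype.val '' S.leafSet d₁ ⊆ T.leafSet e₁) ∨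
      (T.leafSet x ∩ Y ⊆ Subtype.val '' S.leafSet d₁) := by
    obtain ⟨z₁, hz₁⟩ := trace_of_Svertex hres d₁
    have haz : a ∈ T.leafSet z₁ := by
      have h0 : (a : X) ∈ Subtype.val '' S.leafSet d₁ := ⟨⟨a, haY⟩, hain, rfl⟩
      rw [hz₁] at h0; exact h0.1
    rcases desc_total haz (desc_trans (desc_of_child he₁) ha) with h | h
    · right
      intro t ht
      rw [hz₁]
      exact ⟨leafSet_mono h ht.1, ht.2⟩
    · by_cases hzx : z₁ = x
      · right
        intro t ht
        rw [hz₁, hzx]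
        exact ht
      · left
        obtain ⟨e, he, hez⟩ := exists_child_desc h hzx
        have hee : e = e₁ := child_unique he he₁ (desc_trans hez haz) ha
        rw [hz₁]
        intro t ht
        exact leafSet_mono (hee ▸ hez) ht.1
  have dich₂ : (Subtype.val '' S.leafSet d₂ ⊆ T.leafSet e₂) ∨
      (T.leafSet x ∩ Y ⊆ Subtype.val '' S.leafSet d₂) := by
    obtain ⟨z₂, hz₂⟩ := trace_of_Svertex hres d₂
    have hbz : b ∈ T.leafSet z₂ := by
      have h0 : (b : X) ∈ Subtype.val '' S.leafSet d₂ := ⟨⟨b, hbY⟩, hbin, rfl⟩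
      rw [hz₂] at h0; exact h0.1
    rcases desc_total hbz (desc_trans (desc_of_child he₂) hb) with h | h
    · right
      intro t ht
      rw [hz₂]
      exact ⟨leafSet_mono h ht.1, ht.2⟩
    · by_cases hzx : z₂ = x
      · right
        intro t ht
        rw [hz₂, hzx]
        exact ht
      · left
        obtain ⟨e, he, hez⟩ := exists_child_desc h hzx
        have hee : e = e₂ := child_unique he he₂ (desc_trans hez hbz) hb
        rw [hz₂]
        intro t ht
        exact leafSet_mono (hee ▸ hez) ht.1
  have noR : ∀ d : W, d ∈ S.children wx → ¬ (T.leafSet x ∩ Y ⊆ Subtype.val '' S.leafSet d) := by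
    intro d hd hR
    have hsubwx : S.leafSet wx ⊆ S.leafSet d := by
      intro t ht
      exact mem_S_of_val (hR (by rw [← hwx]; exact ⟨t, ht, rfl⟩))
    obtain ⟨d', hd', hdne'⟩ := exists_other_child hSph hd
    obtain ⟨t', ht'⟩ := S.exists_leaf_mem d'
    exact children_disjoint hd' hd hdne' ht' (hsubwx (leafSet_mono (desc_of_child hd') ht'))
  rcases dich₁ with hL₁ | hR₁
  swap
  · exact absurd hR₁ (noR d₁ hd₁)
  rcases dich₂ with hL₂ | hR₂
  swap
  · exact absurd hR₂ (noR d₂ hd₂)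
  refine ⟨wx, d₁, d₂, hd₁, hd₂, ?_, hL₁, hL₂, hain, hbin⟩
  rintro rfl
  exact children_disjoint he₁ he₂ hene (hL₁ ⟨⟨b, hbY⟩, hbin, rfl⟩) hb

end Restriction

/-- The cord graph of the restricted lasso is the induced subgraph. -/
lemma cordGraph_restrict_eq {X : Type} (Y : Set X) (L : Set (Set X)) :
    cordGraph (restrictLasso Y L) = (cordGraph L).induce Y := by
  ext a b
  constructor
  · rintro ⟨hab, a', b', hab', hpair, hmem⟩
    have := Set.pair_eq_pair_iff.1 hpair
    rcases this with ⟨rfl, rfl⟩ | ⟨rfl, rfl⟩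
    · exact ⟨Subtype.coe_injective.ne hab, hmem⟩
    · exact ⟨Subtype.coe_injective.ne hab, by rwa [Set.pair_comm]⟩
  · rintro ⟨hab, hmem⟩
    have hab' : a ≠ b := fun h => hab (by rw [h])
    exact ⟨hab', a, b, hab', rfl, hmem⟩

/-- Claw-freeness is preserved by induced subgraphs. -/
lemma clawFree_induce {α : Type} {G : SimpleGraph α} (h : ClawFree G) (s : Set α) :
    ClawFree (G.induce s) := by
  rintro ⟨v, a, b, c, hab, hac, hbc, h1, h2, h3, n1, n2, n3⟩
  exact h ⟨(v : α), a, b, c, Subtype.coe_injective.ne hab, Subtype.coe_injective.ne hac,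
    Subtype.coe_injective.ne hbc, h1, h2, h3, fun h' => n1 h', fun h' => n2 h',
    fun h' => n3 h'⟩

/-- Transfer of connectivity between `(G.induce s).induce B` and
`G.induce (Subtype.val '' B)`. -/
lemma induce_induce_connected {α : Type} {G : SimpleGraph α} {s : Set α} {B : Set ↥s}
    (h : ((G.induce s).induce B).Connected) :
    (G.induce (Subtype.val '' B)).Connected := by
  have e : ((G.induce s).induce B) ≃g (G.induce (Subtype.val '' B)) := by
    refine ⟨Equiv.Set.image Subtype.val B Subtype.coe_injective, ?_⟩
    intro x y
    rfl
  exact e.connected_iff.1 h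

/-- A good set of an induced subgraph is good in the ambient graph. -/
lemma goodSet_image {α : Type} {G : SimpleGraph α} {s : Set α} {B : Set ↥s}
    (hB : GoodSet (G.induce s) B) : GoodSet G (Subtype.val '' B) := by
  obtain ⟨hne, hconn, hdel⟩ := hB
  refine ⟨hne.image _, induce_induce_connected hconn, ?_⟩
  rintro x ⟨v, hv, rfl⟩ hne'
  have himg : (Subtype.val '' B) \ {(v : α)} = Subtype.val '' (B \ {v}) := by
    rw [Set.image_diff Subtype.coe_injective, Set.image_singleton]
  rw [himg]
  refine induce_induce_connected (hdel v hv ?_)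
  obtain ⟨y, hy⟩ := himg ▸ hne'
  obtain ⟨w, hw, rfl⟩ := hy
  exact ⟨w, hw⟩

/-- Block graphs are closed under induced subgraphs (finite case). -/
lemma isBlockGraph_induce {α : Type} [Fintype α] {G : SimpleGraph α}
    (h : IsBlockGraph G) (s : Set α) : IsBlockGraph (G.induce s) := by
  intro B hB
  intro a ha b hb hab
  obtain ⟨C, hC, hBC⟩ := exists_block_superset (goodSet_image hB.1)
  exact h C hC (hBC ⟨a, ha, rfl⟩) (hBC ⟨b, hb, rfl⟩) (Subtype.coe_injective.ne hab)

end Aux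

/-- for a distinguished minimal topological lasso `L` of `T` and
`Y ⊆ X` with `|Y| ≥ 3`, the restriction `L|_Y` is a distinguished minimal topological
lasso for `T|_Y` iff the subgraph of `Γ(L)` induced on `Y` is connected. -/
theorem stmt19 {X V W : Type} [Fintype X] [Fintype V] [Fintype W] (T : XTree X V)
    (hph : T.IsPhylo) (hX : 3 ≤ Fintype.card X)
    (L : Set (Set X)) (hc : ∀ c ∈ L, IsCord c) (hcov : ∀ x : X, ∃ c ∈ L, x ∈ c)
    (hmin : T.IsMinTopoLasso L) (hbg : IsBlockGraph (cordGraph L))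
    (hcf : ClawFree (cordGraph L))
    (Y : Set X) (hY : 3 ≤ Y.ncard)
    (S : XTree (↥Y) W) (hSph : S.IsPhylo) (hres : IsRestriction Y T S) :
    (S.IsMinTopoLasso (restrictLasso Y L) ∧
        IsBlockGraph (cordGraph (restrictLasso Y L)) ∧
        ClawFree (cordGraph (restrictLasso Y L))) ↔
      ((cordGraph L).induce Y).Connected := by
  have hYne : Nonempty ↥Y := by
    have : Y.Nonempty := Set.nonempty_of_ncard_ne_zero (by omega)
    exact this.to_subtype
  constructor
  · rintro ⟨⟨hlasso, -⟩, -, -⟩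
    rw [← cordGraph_restrict_eq]
    exact ⟨fun a b => reachable_of_topoLasso S _ hlasso a b⟩
  · intro hconn
    have hlasso : S.IsTopoLasso (restrictLasso Y L) := by
      intro w d₁ d₂ hd₁ hd₂ hdne
      obtain ⟨u, c₁, c₂, hc₁, hc₂, hcne, htr₁, htr₂⟩ :=
        restrict_children_correspond hres hd₁ hd₂ hdne
      obtain ⟨m₁, m₂, hm₁, hm₂, hmem⟩ := hmin.1 u c₁ c₂ hc₁ hc₂ hcne
      have hne₁ : (T.leafSet c₁ ∩ Y).Nonempty := by
        rw [htr₁]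
        exact (S.exists_leaf_mem d₁).image _
      have hne₂ : (T.leafSet c₂ ∩ Y).Nonempty := by
        rw [htr₂]
        exact (S.exists_leaf_mem d₂).image _
      obtain ⟨p, hp⟩ := hne₁
      obtain ⟨q, hq⟩ := hne₂
      have hm₁Y : m₁ ∈ Y := marker_in_Y hmin hbg hconn hc₁ hc₂ hcne hm₁ hm₂ hmem hp hq
      have hm₂Y : m₂ ∈ Y := marker_in_Y hmin hbg hconn hc₂ hc₁ (Ne.symm hcne) hm₂ hm₁
        (by rwa [Set.pair_comm]) hq hp
      have h1 : (⟨m₁, hm₁Y⟩ : ↥Y) ∈ S.leafSet d₁ :=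
        mem_S_of_val (by rw [← htr₁]; exact ⟨hm₁, hm₁Y⟩)
      have h2 : (⟨m₂, hm₂Y⟩ : ↥Y) ∈ S.leafSet d₂ :=
        mem_S_of_val (by rw [← htr₂]; exact ⟨hm₂, hm₂Y⟩)
      refine ⟨⟨m₁, hm₁Y⟩, ⟨m₂, hm₂Y⟩, h1, h2, ?_⟩
      refine ⟨⟨m₁, hm₁Y⟩, ⟨m₂, hm₂Y⟩, ?_, rfl, hmem⟩
      intro hE
      have hEX : m₁ = m₂ := congrArg Subtype.val hE
      have hm₁c₂ : m₁ ∈ T.leafSet c₂ := by rw [hEX]; exact hm₂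
      exact XTree.children_disjoint hc₁ hc₂ hcne hm₁ hm₁c₂
    have hmin' : ∀ L' ⊆ restrictLasso Y L, S.IsTopoLasso L' → L' = restrictLasso Y L := by
      intro L'' hsub hl''
      refine Set.Subset.antisymm hsub ?_
      rintro c ⟨ah, bh, hab, rfl, hmemL⟩
      have habX : (ah : X) ≠ (bh : X) := fun h => hab (Subtype.ext h)
      obtain ⟨x, e₁, e₂, he₁, he₂, hene, haE, hbE⟩ := exists_crossAt (T := T) habX
      obtain ⟨w, d₁, d₂, hd₁, hd₂, hdne, hsub₁, hsub₂, hain, hbin⟩ :=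
        cross_children_correspond hSph hres he₁ he₂ hene haE ah.2 hbE bh.2
      obtain ⟨ph, qh, hph', hqh', hpq⟩ := hl'' w d₁ d₂ hd₁ hd₂ hdne
      have hLpq : ({(ph : X), (qh : X)} : Set X) ∈ L := by
        obtain ⟨ph', qh', hpq'ne, hpair, hL⟩ := hsub hpq
        rcases Set.pair_eq_pair_iff.1 hpair with ⟨rfl, rfl⟩ | ⟨rfl, rfl⟩
        · exact hL
        · rwa [Set.pair_comm]
      have hpE : (ph : X) ∈ T.leafSet e₁ := hsub₁ ⟨ph, hph', rfl⟩
      have hqE : (qh : X) ∈ T.leafSet e₂ := hsub₂ ⟨qh, hqh', rfl⟩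
      obtain ⟨h1, h2⟩ := cross_cord_unique hmin hmemL ⟨he₁, he₂, hene, haE, hbE⟩
        hLpq ⟨he₁, he₂, hene, hpE, hqE⟩
      have e1 : ah = ph := Subtype.ext h1
      have e2 : bh = qh := Subtype.ext h2
      rw [e1, e2]
      exact hpq
    refine ⟨⟨hlasso, hmin'⟩, ?_, ?_⟩
    · rw [cordGraph_restrict_eq]
      exact isBlockGraph_induce hbg Y
    · rw [cordGraph_restrict_eq]
      exact clawFree_induce hcf Y
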